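/- Let P be a preference profile and let w ∈ RV^PUT(P) be a River PUT winner. Let T^RSP = T^RSP(w, sRV(P)) be an output of the directed Prim algorithm started at w on the semi-River diagram sRV(P), and let o^RSP = σ(E(M(P)), E(T^RSP)) be any descending linear ordering in which, among edges of equal margin, edges of T^RSP come first. Then T^RSP = M^RV(o^RSP, P); in particular, w is the root of M^RV(o^RSP, P) and hence w ∈ RV(o^RSP, P). -/

import Mathlib

attribute [local instance] Classical.propDecidable

/-- A preference profile: each of `m` voters has a strict linear (total) preference
relation over the alternatives `A`. -/
structure Profile (A : Type*) (m : ℕ) where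
  pref : Fin m → A → A → Prop
  strict : ∀ i, IsStrictTotalOrder A (pref i)

/-- The majority margin of `x` over `y`: the number of voters preferring `x` to `y`
minus the number of voters preferring `y` to `x`. -/
noncomputable def margin {A : Type*} [Fintype A] {m : ℕ} (P : Profile A m) (x y : A) : ℤ :=
  ((Finset.univ.filter fun i => P.pref i x y).card : ℤ) -
    ((Finset.univ.filter fun i => P.pref i y x).card : ℤ)

/-- The majority margin as a function on (potential) edges. -/
noncomputable def marginE {A : Type*} [Fintype A] {m : ℕ} (P : Profile A m) : A × A → ℤ :=
  fun e => margin P e.1 e.2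

/-- The edge set of the margin graph: an edge `(x, y)` between distinct alternatives
whenever the majority margin of `x` over `y` is nonnegative. -/
noncomputable def marginEdges {A : Type*} [Fintype A] {m : ℕ} (P : Profile A m) :
    Finset (A × A) :=
  Finset.univ.filter fun e => e.1 ≠ e.2 ∧ 0 ≤ margin P e.1 e.2

/-- `l` is a path from `x` to `y` in the digraph with edge set `E`:
a nonempty list of pairwise distinct vertices starting at `x`, ending at `y`,
whose consecutive vertices are joined by edges of `E`. -/
def IsPathFrom {V : Type*} (E : Finset (V × V)) (l : List V) (x y : V) : Prop :=
  l ≠ [] ∧ l.Nodup ∧ l.head? = some x ∧ l.getLast? = some y ∧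
    l.Chain' fun a b => (a, b) ∈ E

/-- There is a path from `x` to `y` in the digraph with edge set `E`. -/
def Reach {V : Type*} (E : Finset (V × V)) (x y : V) : Prop :=
  ∃ l, IsPathFrom E l x y

/-- The digraph with edge set `E` contains a directed cycle. -/
def HasCycle {V : Type*} (E : Finset (V × V)) : Prop :=
  ∃ f ∈ E, Reach E f.2 f.1

/-- `T` is a tree rooted at `r`: there is a unique path from `r` to every vertex,
no edge enters the root, and every vertex has at most one incoming edge. -/
def IsRootedTree {V : Type*} (T : Finset (V × V)) (r : V) : Prop :=
  (∀ v : V, ∃! l : List V, IsPathFrom T l r v) ∧ (∀ e ∈ T, e.2 ≠ r) ∧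
    ∀ e f, e ∈ T → f ∈ T → e.2 = f.2 → e = f

/-- `a` has no incoming edge in `D`. -/
def noIncoming {V : Type*} (D : Finset (V × V)) (a : V) : Prop :=
  ∀ e ∈ D, e.2 ≠ a

/-- `o` is a descending linear ordering of the edge set `E` with respect to the
margin function `marg`: an enumeration of `E` without repetition in which edges of
larger margin come before edges of smaller margin. -/
def IsDescOrdering {V : Type*} (marg : V × V → ℤ) (E : Finset (V × V))
    (o : List (V × V)) : Prop :=
  o.Nodup ∧ (∀ e, e ∈ o ↔ e ∈ E) ∧ o.Pairwise fun e f => marg f ≤ marg e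

/-- One step of the River procedure: add `e = (x, y)` to the current diagram `D` unless
(R1) `y` already has an incoming edge in `D`, or (R2) there is a path from `y` to `x`
in `D`. -/
noncomputable def riverStep {V : Type*} (D : Finset (V × V)) (e : V × V) :
    Finset (V × V) :=
  if (∃ f ∈ D, f.2 = e.2) ∨ Reach D e.2 e.1 then D else insert e D

/-- The River diagram obtained by processing the edges in the order `o`,
starting from the empty diagram. -/
noncomputable def riverFold {V : Type*} (o : List (V × V)) : Finset (V × V) :=
  o.foldl riverStep ∅

/-- One step of the semi-River process with margin function `marg`: add `e = (x, y)` to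
the current diagram `D` unless
(sR1) there is another incoming edge `e' = (z, y)` of `y` among the included edges of
margin strictly greater than `marg e` such that there is no path from `y` to `z` among
the included edges of margin at least `marg e'`, or
(sR2) within the included edges of strictly greater margin, the set of vertices having
a path to `x` avoiding all incoming edges of `y` induces an acyclic subgraph in which
`y` is the only vertex with no incoming edge. -/
noncomputable def semiRiverStep {V : Type*} (marg : V × V → ℤ) (D : Finset (V × V))
    (e : V × V) : Finset (V × V) :=
  let Sgt := D.filter fun f => marg e < marg f
  let sR1 : Prop := ∃ f ∈ Sgt, f.2 = e.2 ∧
      ¬ Reach (D.filter fun g => marg f ≤ marg g) e.2 f.1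
  let Anc : Set V := {v | Reach (Sgt.filter fun g => g.2 ≠ e.2) v e.1}
  let ind := Sgt.filter fun g => g.1 ∈ Anc ∧ g.2 ∈ Anc
  let sR2 : Prop := e.2 ∈ Anc ∧ ¬ HasCycle ind ∧
      ∀ v ∈ Anc, ((∀ g ∈ ind, g.2 ≠ v) ↔ v = e.2)
  if sR1 ∨ sR2 then D else insert e D

/-- The semi-River diagram obtained by processing the edges in the order `o`,
starting from the empty diagram. -/
noncomputable def semiRiverFold {V : Type*} (marg : V × V → ℤ) (o : List (V × V)) :
    Finset (V × V) :=
  o.foldl (semiRiverStep marg) ∅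

/-- The runs of the directed Prim algorithm on the digraph with edge set `E`, weight
function `w`, and start vertex `s`: `PrimRun E w s S T` holds if after some number of
steps the set of explored vertices is `S` and the collected tree edges are `T`; at each
step an arbitrary crossing edge of maximum weight is selected. -/
inductive PrimRun {V : Type*} {β : Type*} [LinearOrder β] (E : Finset (V × V))
    (w : V × V → β) (s : V) : Finset V → Finset (V × V) → Prop
  | init : PrimRun E w s {s} ∅
  | step {S : Finset V} {T : Finset (V × V)} (e : V × V) (he : e ∈ E)
      (h1 : e.1 ∈ S) (h2 : e.2 ∉ S)
      (hmax : ∀ f ∈ E, f.1 ∈ S → f.2 ∉ S → w f ≤ w e)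
      (hrun : PrimRun E w s S T) :
      PrimRun E w s (insert e.2 S) (insert e T)

/-- `T` is a possible output of the directed Prim algorithm on `(E, w)` started at `s`:
it is obtained by a run that has terminated, i.e. no crossing edge remains. -/
def IsPrimOutput {V : Type*} {β : Type*} [LinearOrder β] (E : Finset (V × V))
    (w : V × V → β) (s : V) (T : Finset (V × V)) : Prop :=
  ∃ S : Finset V, PrimRun E w s S T ∧ ∀ f ∈ E, f.1 ∈ S → f.2 ∈ S

/-- The strength of a path (as a list of vertices): the minimum weight of its edges,
`⊤` for a trivial path with no edges. -/
noncomputable def strength {V : Type*} (w : V × V → ℕ) (l : List V) : ℕ∞ :=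
  ((l.zip l.tail).map fun p => (w p : ℕ∞)).foldr min ⊤

/-- `l` is a strongest path from `x` to `y`: it is a path from `x` to `y` and no path
from `x` to `y` has (strictly) greater strength. -/
def IsStrongestPath {V : Type*} (E : Finset (V × V)) (w : V × V → ℕ) (l : List V)
    (x y : V) : Prop :=
  IsPathFrom E l x y ∧ ∀ l', IsPathFrom E l' x y → strength w l' ≤ strength w l

/-- `o` is a descending linear ordering of `E` in which, among edges of equal margin,
edges belonging to `E'` come before edges not belonging to `E'`. -/
def IsSetOrdering {V : Type*} (marg : V × V → ℤ) (E E' : Finset (V × V))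
    (o : List (V × V)) : Prop :=
  o.Nodup ∧ (∀ e, e ∈ o ↔ e ∈ E) ∧
    o.Pairwise fun e f => marg f ≤ marg e ∧ (marg e = marg f → f ∈ E' → e ∈ E')

namespace RiverAux

variable {V : Type*}

theorem reach_refl (E : Finset (V × V)) (x : V) : Reach E x x :=
  ⟨[x], by simp [IsPathFrom, List.Chain']⟩

theorem pathFrom_head_last {E : Finset (V × V)} {l : List V} {x y : V}
    (h : IsPathFrom E l x y) : x ∈ l ∧ y ∈ l :=
  ⟨List.mem_of_mem_head? h.2.2.1, List.mem_of_mem_getLast? h.2.2.2.1⟩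

theorem pathFrom_eq_singleton {E : Finset (V × V)} {l : List V} {x : V}
    (h : IsPathFrom E l x x) : l = [x] := by
  obtain ⟨hne, hnd, hhd, hlast, _⟩ := h
  match l, hne with
  | [a], _ => simp at hhd; simp [hhd]
  | a :: b :: r, _ =>
    exfalso
    simp at hhd
    subst hhd
    have hl : (a :: b :: r).getLast? = some ((b :: r).getLast (by simp)) := by
      rw [List.getLast?_eq_getLast (by simp)]
      simp [List.getLast_cons]
    rw [hl] at hlast
    have h1 : (b :: r).getLast (by simp) = a := by simpa using hlast
    have hmem : a ∈ b :: r := h1 ▸ List.getLast_mem _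
    simp only [List.nodup_cons] at hnd
    exact hnd.1 hmem

/-- appending an edge to a path, truncating if needed -/
theorem reach_snoc {E : Finset (V × V)} {x u v : V}
    (h : Reach E x u) (he : (u, v) ∈ E) : Reach E x v := by
  obtain ⟨l, hl⟩ := h
  by_cases hv : v ∈ l
  · -- truncate: take prefix of l up to first occurrence of v
    obtain ⟨hne, hnd, hhd, hlast, hch⟩ := hl
    set n := l.idxOf v with hn
    have hlt : n < l.length := List.idxOf_lt_length_iff.2 hv
    refine ⟨l.take (n+1), ?_, ?_, ?_, ?_, ?_⟩
    · have : (l.take (n+1)).length = n+1 := by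
        rw [List.length_take]; omega
      intro hnil; rw [hnil] at this; simp at this
    · exact hnd.sublist (List.take_sublist _ _)
    · have h1 : (l.take (n+1)).head? = l.head? := by
        match l, hne with
        | a :: r, _ => simp
      rw [h1]; exact hhd
    · have hlen : (l.take (n+1)).length = n+1 := by
        rw [List.length_take]; omega
      rw [List.getLast?_eq_getElem?, hlen]
      simp only [Nat.add_sub_cancel]
      rw [List.getElem?_take, if_pos (by omega), List.getElem?_eq_getElem hlt]
      have : l[n] = v := List.getElem_idxOf hlt
      rw [this]
    · exact hch.take _
  · obtain ⟨hne, hnd, hhd, hlast, hch⟩ := hl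
    refine ⟨l ++ [v], by simp, ?_, ?_, by simp, ?_⟩
    · simp [List.nodup_append, hnd, hv]
      intro a ha h; exact hv (h ▸ ha)
    · rw [List.head?_append_of_ne_nil l hne]; exact hhd
    · unfold List.Chain'; rw [List.isChain_append]
      refine ⟨hch, by simp, ?_⟩
      intro a ha b hb
      simp only [List.head?_cons, Option.mem_def, Option.some.injEq] at hb
      subst hb
      rw [hlast] at ha
      simp only [Option.mem_def, Option.some.injEq] at ha
      subst ha; exact he

/-- Reach is equivalent to reflexive-transitive closure of the edge relation -/
theorem reach_iff_rtg {E : Finset (V × V)} {x y : V} :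
    Reach E x y ↔ Relation.ReflTransGen (fun a b => (a, b) ∈ E) x y := by
  constructor
  · rintro ⟨l, hl⟩
    obtain ⟨hne, hnd, hhd, hlast, hch⟩ := hl
    clear hnd
    induction l generalizing x with
    | nil => exact absurd rfl hne
    | cons a r ih =>
      simp only [List.head?_cons, Option.some.injEq] at hhd
      subst hhd
      cases r with
      | nil =>
        simp at hlast; subst hlast; exact .refl
      | cons b r' =>
        have hedge : (a, b) ∈ E := (List.isChain_cons_cons.1 hch).1
        have htail : Relation.ReflTransGen (fun a b => (a, b) ∈ E) b y := by
          refine ih (x := b) (by simp) (by simp) ?_ ?_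
          · rw [List.getLast?_eq_getLast (by simp)] at hlast ⊢
            simpa [List.getLast_cons] using hlast
          · exact (List.isChain_cons_cons.1 hch).2
        exact .head hedge htail
  · intro h
    induction h with
    | refl => exact reach_refl E x
    | tail _ hedge ih => exact reach_snoc ih hedge

theorem reach_mono {E F : Finset (V × V)} (hEF : E ⊆ F) {x y : V}
    (h : Reach E x y) : Reach F x y := by
  rw [reach_iff_rtg] at h ⊢
  exact Relation.ReflTransGen.mono (fun a b hab => hEF hab) _ _ h

theorem reach_trans {E : Finset (V × V)} {x y z : V}
    (h1 : Reach E x y) (h2 : Reach E y z) : Reach E x z := by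
  rw [reach_iff_rtg] at h1 h2 ⊢
  exact h1.trans h2

theorem reach_head {E : Finset (V × V)} {x y : V} (he : (x, y) ∈ E) : Reach E x y :=
  reach_snoc (reach_refl E x) he

/-- last-edge decomposition -/
theorem reach_last_edge {E : Finset (V × V)} {x y : V}
    (h : Reach E x y) (hxy : x ≠ y) : ∃ f ∈ E, f.2 = y ∧ Reach E x f.1 := by
  rw [reach_iff_rtg] at h
  rcases (Relation.reflTransGen_iff_eq_or_transGen.1 h) with h | h
  · exact absurd h.symm hxy
  · obtain ⟨u, hu, hedge⟩ := Relation.TransGen.tail'_iff.1 h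
    exact ⟨(u, y), hedge, rfl, reach_iff_rtg.2 hu⟩

/-- first crossing edge out of a predicate -/
theorem reach_crossing {E : Finset (V × V)} {x y : V} (p : V → Prop)
    (h : Reach E x y) (hx : p x) (hy : ¬ p y) :
    ∃ f ∈ E, p f.1 ∧ ¬ p f.2 := by
  rw [reach_iff_rtg] at h
  induction h with
  | refl => exact absurd hx hy
  | @tail b c hxb hbc ih =>
    by_cases hpb : p b
    · exact ⟨(b, c), hbc, hpb, hy⟩
    · exact ih hpb

/-- rank monotonicity along reachability -/
theorem reach_rank {E : Finset (V × V)} {r : V → ℕ}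
    (hr : ∀ f ∈ E, r f.1 < r f.2) {x y : V} (h : Reach E x y) :
    x = y ∨ r x < r y := by
  rw [reach_iff_rtg] at h
  induction h with
  | refl => exact Or.inl rfl
  | @tail b c hxb hbc ih =>
    right
    rcases ih with rfl | hlt
    · exact hr _ hbc
    · exact hlt.trans (hr _ hbc)

/-- transferring a reach to an induced subgraph -/
theorem reach_induced {E F : Finset (V × V)} {v u : V}
    (h : Reach E v u)
    (H : ∀ a b : V, (a, b) ∈ E → Reach E b u → (a, b) ∈ F) :
    Reach F v u := by
  rw [reach_iff_rtg] at h ⊢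
  induction h using Relation.ReflTransGen.head_induction_on with
  | refl => exact .refl
  | @head a c hac hcu ih =>
    exact .head (H a c hac (reach_iff_rtg.2 hcu)) ih

/-- membership of an edge into y from a nontrivial reach -/
theorem reach_insert {E : Finset (V × V)} {e : V × V} {x y : V}
    (h : Reach (insert e E) x y) :
    Reach E x y ∨ (Reach E x e.1 ∧ Reach E e.2 y) := by
  rw [reach_iff_rtg] at h
  induction h with
  | refl => exact Or.inl (reach_refl E x)
  | @tail b c hxb hbc ih =>
    rcases Finset.mem_insert.1 hbc with rfl | hbc
    · rcases ih with h1 | ⟨h1, h2⟩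
      · exact Or.inr ⟨h1, reach_refl E _⟩
      · exact Or.inr ⟨h1, reach_refl E _⟩
    · rcases ih with h1 | ⟨h1, h2⟩
      · exact Or.inl (reach_snoc h1 hbc)
      · exact Or.inr ⟨h1, reach_snoc h2 hbc⟩

end RiverAux

section Fold

variable {V : Type*}

/-- generic step functions that either keep or insert -/
def StepOK (step : Finset (V × V) → (V × V) → Finset (V × V)) : Prop :=
  ∀ D e, step D e = D ∨ step D e = insert e D

theorem subset_step {step} (h : StepOK (V := V) step) (D : Finset (V × V)) (e : V × V) :
    D ⊆ step D e := by
  rcases h D e with h' | h' <;> rw [h']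
  exact Finset.subset_insert _ _

theorem subset_foldl {step} (h : StepOK (V := V) step) :
    ∀ (l : List (V × V)) (D : Finset (V × V)), D ⊆ l.foldl step D := by
  intro l
  induction l with
  | nil => intro D; exact fun _ hx => hx
  | cons e s ih => intro D; exact (subset_step h D e).trans (ih _)

theorem mem_foldl {step} (h : StepOK (V := V) step) :
    ∀ (l : List (V × V)) (D : Finset (V × V)) (x : V × V),
      x ∈ l.foldl step D → x ∈ D ∨ x ∈ l := by
  intro l
  induction l with
  | nil => intro D x hx; exact Or.inl hx
  | cons e s ih =>
    intro D x hx
    rcases ih _ _ hx with hx' | hx'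
    · rcases h D e with h' | h' <;> rw [h'] at hx'
      · exact Or.inl hx'
      · rcases Finset.mem_insert.1 hx' with rfl | hx''
        · exact Or.inr (by simp)
        · exact Or.inl hx''
    · exact Or.inr (by simp [hx'])

theorem mem_foldl_of_not_mem {step} (h : StepOK (V := V) step)
    {l : List (V × V)} {D : Finset (V × V)} {x : V × V}
    (hx : x ∈ l.foldl step D) (hxl : x ∉ l) : x ∈ D := by
  rcases mem_foldl h l D x hx with h' | h'
  · exact h'
  · exact absurd h' hxl

/-- invariant preservation -/
theorem foldl_invariant {step} (P : Finset (V × V) → Prop)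
    (hP : ∀ D e, P D → P (step D e)) :
    ∀ (l : List (V × V)) (D : Finset (V × V)), P D → P (l.foldl step D) := by
  intro l
  induction l with
  | nil => intro D hD; exact hD
  | cons e s ih => intro D hD; exact ih _ (hP _ _ hD)

/-- the decision about `e` is made when `e` is processed -/
theorem foldl_decision {step} (h : StepOK (V := V) step)
    {p s : List (V × V)} {e : V × V} (hep : e ∉ p) (hes : e ∉ s) :
    e ∈ (p ++ e :: s).foldl step ∅ ↔ e ∈ step (p.foldl step ∅) e := by
  rw [List.foldl_append]
  simp only [List.foldl_cons]
  constructor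
  · intro hmem
    exact mem_foldl_of_not_mem h hmem hes
  · intro hmem
    exact subset_foldl h s _ hmem

theorem step_not_mem_of {step} (h : StepOK (V := V) step)
    {D : Finset (V × V)} {e x : V × V} (hx : x ∈ step D e) : x ∈ D ∨ x = e := by
  rcases h D e with h' | h' <;> rw [h'] at hx
  · exact Or.inl hx
  · rcases Finset.mem_insert.1 hx with rfl | hx'
    · exact Or.inr rfl
    · exact Or.inl hx'

end Fold

section RiverFacts

variable {V : Type*}

theorem riverStep_ok : StepOK (riverStep (V := V)) := by
  intro D e
  unfold riverStep
  split
  · exact Or.inl rfl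
  · exact Or.inr rfl

theorem riverStep_eq_insert {D : Finset (V × V)} {e : V × V}
    (h : ¬ ((∃ f ∈ D, f.2 = e.2) ∨ Reach D e.2 e.1)) :
    riverStep D e = insert e D := by
  unfold riverStep
  exact if_neg h

theorem riverStep_eq_self {D : Finset (V × V)} {e : V × V}
    (h : (∃ f ∈ D, f.2 = e.2) ∨ Reach D e.2 e.1) :
    riverStep D e = D := by
  unfold riverStep
  exact if_pos h

/-- in-degree at most one -/
theorem river_indeg (o : List (V × V)) :
    ∀ f ∈ riverFold o, ∀ g ∈ riverFold o, f.2 = g.2 → f = g := by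
  have := foldl_invariant
    (step := riverStep)
    (P := fun D => ∀ f ∈ D, ∀ g ∈ D, f.2 = g.2 → f = g)
    (fun D e hD => by
      by_cases hc : (∃ f ∈ D, f.2 = e.2) ∨ Reach D e.2 e.1
      · rw [riverStep_eq_self hc]; exact hD
      · rw [riverStep_eq_insert hc]
        push_neg at hc
        intro f hf g hg hfg
        rcases Finset.mem_insert.1 hf with hfe | hf <;>
          rcases Finset.mem_insert.1 hg with hge | hg
        · rw [hfe, hge]
        · exact absurd (hfg ▸ (hfe ▸ rfl : f.2 = e.2).symm ▸ rfl : g.2 = e.2)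
            (hc.1 g hg)
        · exact absurd (hge ▸ hfg : f.2 = e.2) (hc.1 f hf)
        · exact hD f hf g hg hfg) o ∅ (by intro f hf; exact absurd hf (Finset.notMem_empty f))
  exact this

/-- acyclicity -/
theorem river_acyclic (o : List (V × V)) : ¬ HasCycle (riverFold o) := by
  have := foldl_invariant
    (step := riverStep)
    (P := fun D => ¬ HasCycle D)
    (fun D e hD => by
      by_cases hc : (∃ f ∈ D, f.2 = e.2) ∨ Reach D e.2 e.1
      · rw [riverStep_eq_self hc]; exact hD
      · rw [riverStep_eq_insert hc]
        push_neg at hc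
        rintro ⟨f, hf, hreach⟩
        rcases Finset.mem_insert.1 hf with rfl | hf
        · rcases RiverAux.reach_insert hreach with h' | ⟨h', _⟩
          · exact hc.2 h'
          · exact hc.2 h'
        · rcases RiverAux.reach_insert hreach with h' | ⟨h1, h2⟩
          · exact hD ⟨f, hf, h'⟩
          · exact hc.2 (RiverAux.reach_trans (RiverAux.reach_snoc h2 hf) h1)) o ∅
            (by rintro ⟨f, hf, -⟩; exact absurd hf (Finset.notMem_empty f))
  exact this

variable {μ : V × V → ℤ} {ME : Finset (V × V)}

/-- a weak form of ordering hypotheses -/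
structure GoodOrd (μ : V × V → ℤ) (ME : Finset (V × V)) (o : List (V × V)) : Prop where
  nodup : o.Nodup
  mem : ∀ e, e ∈ o ↔ e ∈ ME
  pair : o.Pairwise fun e f => μ f ≤ μ e

theorem river_mem_ME {o : List (V × V)} (ho : GoodOrd μ ME o) {f : V × V}
    (hf : f ∈ riverFold o) : f ∈ ME :=
  (ho.mem f).1 ((mem_foldl riverStep_ok o ∅ f hf).resolve_left (by simp))

/-- key time-analysis: edges of bigger margin are in the diagram at `e`'s processing
time, and the diagram at that time is inside the filtered final diagram -/
theorem river_time {o : List (V × V)} (ho : GoodOrd μ ME o) {e : V × V}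
    (he : e ∈ ME) :
    ∃ D : Finset (V × V),
      D ⊆ riverFold o ∧ (∀ f ∈ D, μ e ≤ μ f) ∧
      ((riverFold o).filter fun g => μ e < μ g) ⊆ D ∧
      (e ∈ riverFold o ↔ ¬ ((∃ f ∈ D, f.2 = e.2) ∨ Reach D e.2 e.1)) := by
  obtain ⟨p, s, rfl⟩ := List.append_of_mem ((ho.mem e).2 he)
  have hnd := ho.nodup
  have hds : List.Disjoint p (e :: s) := List.disjoint_of_nodup_append hnd
  have hep : e ∉ p := fun hp => hds hp (by simp)
  have hes : e ∉ s := by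
    have : (e :: s).Nodup := hnd.of_append_right
    simpa using (List.nodup_cons.1 this).1
  set D := p.foldl riverStep ∅ with hD
  have hfold : riverFold (p ++ e :: s) = s.foldl riverStep (riverStep D e) := by
    unfold riverFold
    rw [List.foldl_append, List.foldl_cons]
  have hDsub : D ⊆ riverFold (p ++ e :: s) := by
    rw [hfold]
    exact (subset_step riverStep_ok D e).trans (subset_foldl riverStep_ok _ _)
  have hpair := ho.pair
  obtain ⟨hp1, hp2, hcross⟩ := List.pairwise_append.1 hpair
  have heD : e ∉ D := fun hmem =>
    hep ((mem_foldl riverStep_ok p ∅ e hmem).resolve_left (by simp))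
  refine ⟨D, hDsub, ?_, ?_, ?_⟩
  · intro f hf
    have hfp : f ∈ p := (mem_foldl riverStep_ok p ∅ f hf).resolve_left (by simp)
    exact hcross f hfp e (by simp)
  · intro g hg
    rw [Finset.mem_filter] at hg
    obtain ⟨hg1, hg2⟩ := hg
    rw [hfold] at hg1
    rcases mem_foldl riverStep_ok s _ g hg1 with hg' | hg'
    · rcases step_not_mem_of riverStep_ok hg' with hg'' | rfl
      · exact hg''
      · omega
    · have : μ g ≤ μ e := List.rel_of_pairwise_cons hp2 hg'
      omega
  · unfold riverFold
    rw [foldl_decision riverStep_ok hep hes, ← hD]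
    constructor
    · intro hmem hcond
      rw [riverStep_eq_self hcond] at hmem
      exact heD hmem
    · intro hcond
      rw [riverStep_eq_insert hcond]
      exact Finset.mem_insert_self e D

/-- rejection dichotomy -/
theorem river_reject {o : List (V × V)} (ho : GoodOrd μ ME o) {e : V × V}
    (he : e ∈ ME) (hnotin : e ∉ riverFold o) :
    (∃ f ∈ riverFold o, f.2 = e.2 ∧ μ e ≤ μ f) ∨
      Reach ((riverFold o).filter fun g => μ e ≤ μ g) e.2 e.1 := by
  obtain ⟨D, hD1, hD2, _, hdec⟩ := river_time ho he
  have hcond : (∃ f ∈ D, f.2 = e.2) ∨ Reach D e.2 e.1 := by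
    by_contra hc
    exact hnotin (hdec.2 hc)
  rcases hcond with ⟨f, hf, hf2⟩ | hr
  · exact Or.inl ⟨f, hD1 hf, hf2, hD2 f hf⟩
  · refine Or.inr (RiverAux.reach_mono ?_ hr)
    intro g hg
    rw [Finset.mem_filter]
    exact ⟨hD1 hg, hD2 g hg⟩

/-- acceptance: no strong return path in the final diagram -/
theorem river_accept {o : List (V × V)} (ho : GoodOrd μ ME o) {e : V × V}
    (hmem : e ∈ riverFold o) :
    ¬ Reach ((riverFold o).filter fun g => μ e < μ g) e.2 e.1 := by
  obtain ⟨D, _, _, hD3, hdec⟩ := river_time ho (river_mem_ME ho hmem)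
  intro hr
  exact (hdec.1 hmem) (Or.inr (RiverAux.reach_mono hD3 hr))

end RiverFacts

section RootSpan

variable {V : Type*}

noncomputable def rMeas [Fintype V] (R : Finset (V × V)) (v : V) : ℕ :=
  (Finset.univ.filter fun z => Reach R z v).card

theorem rMeas_lt [Fintype V] {R : Finset (V × V)} (hacyc : ¬ HasCycle R)
    {f : V × V} (hf : f ∈ R) : rMeas R f.1 < rMeas R f.2 := by
  apply Finset.card_lt_card
  constructor
  · intro z hz
    rw [Finset.mem_filter] at hz ⊢
    exact ⟨hz.1, RiverAux.reach_snoc hz.2 (by simpa using hf)⟩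
  · intro hsub
    have h2 : f.2 ∈ Finset.univ.filter fun z => Reach R z f.2 := by
      rw [Finset.mem_filter]; exact ⟨Finset.mem_univ _, RiverAux.reach_refl _ _⟩
    have h1 := hsub h2
    rw [Finset.mem_filter] at h1
    exact hacyc ⟨f, hf, h1.2⟩

variable {μ : V × V → ℤ} {ME : Finset (V × V)}

theorem river_nonroot {o : List (V × V)} (ho : GoodOrd μ ME o)
    (hcomp : ∀ x y : V, x ≠ y → (x, y) ∈ ME ∨ (y, x) ∈ ME)
    {w : V} (hw : noIncoming (riverFold o) w) :
    ∀ v, v ≠ w → ∃ f ∈ riverFold o, f.2 = v := by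
  intro v hv
  by_contra hno
  push_neg at hno
  rcases hcomp w v (Ne.symm hv) with h1 | h1
  · have hnotin : (w, v) ∉ riverFold o := fun hmem => hno _ hmem rfl
    rcases river_reject ho h1 hnotin with ⟨f, hf, hf2, _⟩ | hr
    · exact hno f hf hf2
    · obtain ⟨g, hg, hg2, _⟩ := RiverAux.reach_last_edge hr hv
      rw [Finset.mem_filter] at hg
      exact hw g hg.1 hg2
  · have hnotin : (v, w) ∉ riverFold o := fun hmem => hw _ hmem rfl
    rcases river_reject ho h1 hnotin with ⟨f, hf, hf2, _⟩ | hr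
    · exact hw f hf hf2
    · obtain ⟨g, hg, hg2, _⟩ := RiverAux.reach_last_edge hr (Ne.symm hv)
      rw [Finset.mem_filter] at hg
      exact hno g hg.1 hg2

theorem river_spanning [Fintype V] {o : List (V × V)} (ho : GoodOrd μ ME o)
    (hcomp : ∀ x y : V, x ≠ y → (x, y) ∈ ME ∨ (y, x) ∈ ME)
    {w : V} (hw : noIncoming (riverFold o) w) :
    ∀ v, Reach (riverFold o) w v := by
  have hacyc := river_acyclic o
  have H : ∀ n v, rMeas (riverFold o) v = n → Reach (riverFold o) w v := by
    intro n
    induction n using Nat.strong_induction_on with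
    | _ n ih =>
      intro v hn
      by_cases hvw : v = w
      · subst hvw; exact RiverAux.reach_refl _ _
      · obtain ⟨f, hf, hf2⟩ := river_nonroot ho hcomp hw v hvw
        have hlt : rMeas (riverFold o) f.1 < n := hn ▸ hf2 ▸ rMeas_lt hacyc hf
        have := ih _ hlt f.1 rfl
        have hedge : (f.1, v) ∈ riverFold o := by rw [← hf2]; simpa using hf
        exact RiverAux.reach_snoc this hedge
  exact fun v => H _ v rfl

end RootSpan

section SemiChar

variable {V : Type*}

noncomputable def SgtF (μ : V × V → ℤ) (G : Finset (V × V)) (e : V × V) :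
    Finset (V × V) := G.filter fun f => μ e < μ f

def SR1 (μ : V × V → ℤ) (G : Finset (V × V)) (e : V × V) : Prop :=
  ∃ f ∈ SgtF μ G e, f.2 = e.2 ∧ ¬ Reach (G.filter fun g => μ f ≤ μ g) e.2 f.1

def AncP (μ : V × V → ℤ) (G : Finset (V × V)) (e : V × V) (v : V) : Prop :=
  Reach ((SgtF μ G e).filter fun g => g.2 ≠ e.2) v e.1

noncomputable def IndF (μ : V × V → ℤ) (G : Finset (V × V)) (e : V × V) :
    Finset (V × V) :=
  (SgtF μ G e).filter fun g => AncP μ G e g.1 ∧ AncP μ G e g.2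

def SR2 (μ : V × V → ℤ) (G : Finset (V × V)) (e : V × V) : Prop :=
  AncP μ G e e.2 ∧ ¬ HasCycle (IndF μ G e) ∧
    ∀ v, AncP μ G e v → ((∀ g ∈ IndF μ G e, g.2 ≠ v) ↔ v = e.2)

theorem semiRiverStep_eq (marg : V × V → ℤ) (D : Finset (V × V)) (e : V × V) :
    semiRiverStep marg D e =
      if (∃ f ∈ D.filter fun f => marg e < marg f, f.2 = e.2 ∧
            ¬ Reach (D.filter fun g => marg f ≤ marg g) e.2 f.1) ∨
          (Reach (((D.filter fun f => marg e < marg f).filter fun g => g.2 ≠ e.2)) e.2 e.1 ∧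
            ¬ HasCycle ((D.filter fun f => marg e < marg f).filter fun g =>
              Reach (((D.filter fun f => marg e < marg f).filter fun g => g.2 ≠ e.2)) g.1 e.1 ∧
              Reach (((D.filter fun f => marg e < marg f).filter fun g => g.2 ≠ e.2)) g.2 e.1) ∧
            ∀ v, Reach (((D.filter fun f => marg e < marg f).filter fun g => g.2 ≠ e.2)) v e.1 →
              ((∀ g ∈ (D.filter fun f => marg e < marg f).filter fun g =>
                Reach (((D.filter fun f => marg e < marg f).filter fun g => g.2 ≠ e.2)) g.1 e.1 ∧
                Reach (((D.filter fun f => marg e < marg f).filter fun g => g.2 ≠ e.2)) g.2 e.1,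
                  g.2 ≠ v) ↔ v = e.2))
      then D else insert e D := rfl

theorem semiStep_ok (marg : V × V → ℤ) : StepOK (semiRiverStep marg (V := V)) := by
  intro D e
  rw [semiRiverStep_eq]
  split
  · exact Or.inl rfl
  · exact Or.inr rfl

variable {μ : V × V → ℤ} {ME : Finset (V × V)}

theorem semi_mem_ME {o : List (V × V)} (ho : GoodOrd μ ME o) {f : V × V}
    (hf : f ∈ semiRiverFold μ o) : f ∈ ME :=
  (ho.mem f).1 ((mem_foldl (semiStep_ok μ) o ∅ f hf).resolve_left (by simp))

theorem semi_time {o : List (V × V)} (ho : GoodOrd μ ME o) {e : V × V}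
    (he : e ∈ ME) :
    ∃ D : Finset (V × V),
      D ⊆ semiRiverFold μ o ∧ (∀ f ∈ D, μ e ≤ μ f) ∧
      ((semiRiverFold μ o).filter fun g => μ e < μ g) ⊆ D ∧
      (e ∈ semiRiverFold μ o ↔ e ∈ semiRiverStep μ D e) ∧ e ∉ D := by
  obtain ⟨p, s, rfl⟩ := List.append_of_mem ((ho.mem e).2 he)
  have hnd := ho.nodup
  have hds : List.Disjoint p (e :: s) := List.disjoint_of_nodup_append hnd
  have hep : e ∉ p := fun hp => hds hp (by simp)
  have hes : e ∉ s := by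
    have : (e :: s).Nodup := hnd.of_append_right
    simpa using (List.nodup_cons.1 this).1
  set D := p.foldl (semiRiverStep μ) ∅ with hD
  have hfold : semiRiverFold μ (p ++ e :: s)
      = s.foldl (semiRiverStep μ) (semiRiverStep μ D e) := by
    unfold semiRiverFold
    rw [List.foldl_append, List.foldl_cons]
  have hDsub : D ⊆ semiRiverFold μ (p ++ e :: s) := by
    rw [hfold]
    exact (subset_step (semiStep_ok μ) D e).trans (subset_foldl (semiStep_ok μ) _ _)
  obtain ⟨hp1, hp2, hcross⟩ := List.pairwise_append.1 ho.pair
  have heD : e ∉ D := fun hmem =>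
    hep ((mem_foldl (semiStep_ok μ) p ∅ e hmem).resolve_left (by simp))
  refine ⟨D, hDsub, ?_, ?_, ?_, heD⟩
  · intro f hf
    have hfp : f ∈ p := (mem_foldl (semiStep_ok μ) p ∅ f hf).resolve_left (by simp)
    exact hcross f hfp e (by simp)
  · intro g hg
    rw [Finset.mem_filter] at hg
    obtain ⟨hg1, hg2⟩ := hg
    rw [hfold] at hg1
    rcases mem_foldl (semiStep_ok μ) s _ g hg1 with hg' | hg'
    · rcases step_not_mem_of (semiStep_ok μ) hg' with hg'' | rfl
      · exact hg''
      · omega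
    · have : μ g ≤ μ e := List.rel_of_pairwise_cons hp2 hg'
      omega
  · unfold semiRiverFold
    exact foldl_decision (semiStep_ok μ) hep hes

/-- the membership characterization of the semi-River diagram -/
theorem semi_char {o : List (V × V)} (ho : GoodOrd μ ME o) {e : V × V}
    (he : e ∈ ME) :
    e ∈ semiRiverFold μ o ↔
      ¬ (SR1 μ (semiRiverFold μ o) e ∨ SR2 μ (semiRiverFold μ o) e) := by
  obtain ⟨D, hD1, hD2, hD3, hdec, heD⟩ := semi_time ho he
  set G := semiRiverFold μ o with hG
  have hA : (D.filter fun f => μ e < μ f) = SgtF μ G e := by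
    apply Finset.Subset.antisymm
    · intro f hf
      rw [Finset.mem_filter] at hf
      rw [SgtF, Finset.mem_filter]
      exact ⟨hD1 hf.1, hf.2⟩
    · intro f hf
      rw [SgtF, Finset.mem_filter] at hf
      rw [Finset.mem_filter]
      exact ⟨hD3 (Finset.mem_filter.2 hf), hf.2⟩
  have hB : ∀ f : V × V, μ e < μ f →
      (D.filter fun g => μ f ≤ μ g) = (G.filter fun g => μ f ≤ μ g) := by
    intro f hμ
    apply Finset.Subset.antisymm
    · intro g hg
      rw [Finset.mem_filter] at hg ⊢
      exact ⟨hD1 hg.1, hg.2⟩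
    · intro g hg
      rw [Finset.mem_filter] at hg ⊢
      refine ⟨hD3 (Finset.mem_filter.2 ⟨hg.1, by omega⟩), hg.2⟩
  -- the step condition with D is equivalent to the final-diagram conditions
  have hcond : ((∃ f ∈ SgtF μ G e, f.2 = e.2 ∧
        ¬ Reach (D.filter fun g => μ f ≤ μ g) e.2 f.1) ↔ SR1 μ G e) := by
    constructor
    · rintro ⟨f, hf, h2, h3⟩
      have hμ : μ e < μ f := by
        rw [SgtF, Finset.mem_filter] at hf; exact hf.2
      rw [hB f hμ] at h3
      exact ⟨f, hf, h2, h3⟩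
    · rintro ⟨f, hf, h2, h3⟩
      have hμ : μ e < μ f := by
        rw [SgtF, Finset.mem_filter] at hf; exact hf.2
      rw [← hB f hμ] at h3
      exact ⟨f, hf, h2, h3⟩
  rw [hdec, semiRiverStep_eq, hA]
  by_cases hcond2 : SR1 μ G e ∨ SR2 μ G e
  · rw [if_pos]
    · exact iff_of_false heD (fun hn => hn hcond2)
    · rcases hcond2 with h | h
      · exact Or.inl (hcond.2 h)
      · exact Or.inr h
  · rw [if_neg]
    · exact iff_of_true (Finset.mem_insert_self e D) hcond2
    · intro hc
      rcases hc with h | h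
      · exact hcond2 (Or.inl (hcond.1 h))
      · exact hcond2 (Or.inr h)

end SemiChar

section PrimTrace

variable {V : Type*}

/-- a trace of a Prim run -/
structure PTrace (E : Finset (V × V)) (μ : V × V → ℤ) (w : V)
    (S : Finset V) (T : Finset (V × V)) (N : ℕ) (v : ℕ → V) (fe : ℕ → V × V) :
    Prop where
  v0 : v 0 = w
  inj : ∀ i ≤ N, ∀ j ≤ N, v i = v j → i = j
  hS : S = (Finset.range (N+1)).image v
  hT : T = (Finset.range N).image fe
  memE : ∀ i < N, fe i ∈ E
  head : ∀ i < N, (fe i).2 = v (i+1)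
  tail : ∀ i < N, ∃ j ≤ i, (fe i).1 = v j
  hmax : ∀ i < N, ∀ g ∈ E, (∃ j ≤ i, g.1 = v j) → (∀ j ≤ i, g.2 ≠ v j) →
    μ g ≤ μ (fe i)

theorem prim_trace {E : Finset (V × V)} {μ : V × V → ℤ} {w : V}
    {S : Finset V} {T : Finset (V × V)} (h : PrimRun E μ w S T) :
    ∃ N v fe, PTrace E μ w S T N v fe := by
  induction h with
  | init =>
    exact ⟨0, fun _ => w, fun _ => (w, w),
      rfl, fun i hi j hj _ => by omega, by simp, by simp,
      fun i hi => absurd hi (by omega), fun i hi => absurd hi (by omega),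
      fun i hi => absurd hi (by omega), fun i hi => absurd hi (by omega)⟩
  | @step S T e he h1 h2 hmax hrun ih =>
    obtain ⟨N, v, fe, tr⟩ := ih
    refine ⟨N + 1, fun i => if i = N+1 then e.2 else v i,
      fun i => if i = N then e else fe i, ?_⟩
    have hvS : ∀ x, x ∈ S ↔ ∃ j ≤ N, v j = x := by
      intro x
      rw [tr.hS]
      simp only [Finset.mem_image, Finset.mem_range]
      constructor
      · rintro ⟨j, hj, rfl⟩; exact ⟨j, by omega, rfl⟩
      · rintro ⟨j, hj, rfl⟩; exact ⟨j, by omega, rfl⟩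
    have himgS : (Finset.range (N+1)).image (fun i => if i = N+1 then e.2 else v i)
        = (Finset.range (N+1)).image v := by
      apply Finset.image_congr
      intro i hi
      simp only [Finset.coe_range, Set.mem_Iio] at hi
      simp only []
      rw [if_neg (by omega)]
    have himgT : (Finset.range N).image (fun i => if i = N then e else fe i)
        = (Finset.range N).image fe := by
      apply Finset.image_congr
      intro i hi
      simp only [Finset.coe_range, Set.mem_Iio] at hi
      simp only []
      rw [if_neg (by omega)]
    constructor
    · simpa using tr.v0
    · intro i hi j hj hij
      by_cases hiN : i = N+1 <;> by_cases hjN : j = N+1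
      · omega
      · rw [if_pos hiN, if_neg hjN] at hij
        exact absurd ((hvS e.2).2 ⟨j, by omega, hij.symm⟩) h2
      · rw [if_neg hiN, if_pos hjN] at hij
        exact absurd ((hvS e.2).2 ⟨i, by omega, hij⟩) h2
      · rw [if_neg hiN, if_neg hjN] at hij
        exact tr.inj i (by omega) j (by omega) hij
    · rw [Finset.range_add_one, Finset.image_insert, himgS, ← tr.hS, if_pos rfl]
    · rw [Finset.range_add_one, Finset.image_insert, himgT, ← tr.hT, if_pos rfl]
    · intro i hi
      by_cases hiN : i = N
      · rw [if_pos hiN]; exact he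
      · rw [if_neg hiN]; exact tr.memE i (by omega)
    · intro i hi
      by_cases hiN : i = N
      · subst hiN; rw [if_pos rfl, if_pos rfl]
      · rw [if_neg hiN, if_neg (by omega : ¬ i + 1 = N + 1)]
        exact tr.head i (by omega)
    · intro i hi
      by_cases hiN : i = N
      · subst hiN
        rw [if_pos rfl]
        obtain ⟨j, hj, hje⟩ := (hvS e.1).1 h1
        exact ⟨j, hj, by rw [if_neg (by omega)]; exact hje.symm⟩
      · rw [if_neg hiN]
        obtain ⟨j, hj, hje⟩ := tr.tail i (by omega)
        exact ⟨j, hj, by rw [if_neg (by omega)]; exact hje⟩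
    · intro i hi g hg htail hhead
      by_cases hiN : i = N
      · subst hiN
        rw [if_pos rfl]
        apply hmax g hg
        · obtain ⟨j, hj, hje⟩ := htail
          rw [if_neg (by omega)] at hje
          exact (hvS g.1).2 ⟨j, by omega, hje.symm⟩
        · intro hgS
          obtain ⟨j, hj, hje⟩ := (hvS g.2).1 hgS
          exact hhead j (by omega) (by rw [if_neg (by omega)]; exact hje.symm)
      · rw [if_neg hiN]
        apply tr.hmax i (by omega) g hg
        · obtain ⟨j, hj, hje⟩ := htail
          refine ⟨j, ?_, ?_⟩
          · omega
          · rwa [if_neg (by omega)] at hje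
        · intro j hj
          have := hhead j (by omega)
          rwa [if_neg (by omega)] at this

variable {E : Finset (V × V)} {μ : V × V → ℤ} {w : V} {S : Finset V}
  {T : Finset (V × V)} {N : ℕ} {v : ℕ → V} {fe : ℕ → V × V}

/-- rank function from a trace -/
noncomputable def trRank (N : ℕ) (v : ℕ → V) (x : V) : ℕ :=
  if h : ∃ i, i ≤ N ∧ v i = x then h.choose else 0

theorem trRank_spec (tr : PTrace E μ w S T N v fe) {i : ℕ} (hi : i ≤ N) :
    trRank N v (v i) = i := by
  have h : ∃ j, j ≤ N ∧ v j = v i := ⟨i, hi, rfl⟩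
  rw [trRank, dif_pos h]
  exact tr.inj _ h.choose_spec.1 _ hi h.choose_spec.2

theorem trRank_le (tr : PTrace E μ w S T N v fe) (huniv : ∀ x, x ∈ S) (x : V) :
    trRank N v x ≤ N ∧ v (trRank N v x) = x := by
  have hx := huniv x
  rw [tr.hS] at hx
  simp only [Finset.mem_image, Finset.mem_range] at hx
  obtain ⟨i, hi, rfl⟩ := hx
  rw [trRank_spec tr (by omega)]
  exact ⟨by omega, rfl⟩

theorem tr_edge_rank (tr : PTrace E μ w S T N v fe) {f : V × V} (hf : f ∈ T) :
    ∃ i < N, f = fe i ∧ trRank N v f.2 = i + 1 ∧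
      trRank N v f.1 ≤ i ∧ v (trRank N v f.1) = f.1 := by
  rw [tr.hT] at hf
  simp only [Finset.mem_image, Finset.mem_range] at hf
  obtain ⟨i, hi, rfl⟩ := hf
  obtain ⟨j, hj, hje⟩ := tr.tail i hi
  refine ⟨i, hi, rfl, ?_, ?_, ?_⟩
  · rw [tr.head i hi, trRank_spec tr (by omega)]
  · rw [hje, trRank_spec tr (by omega)]; omega
  · rw [hje, trRank_spec tr (by omega)]

theorem tr_rank_lt (tr : PTrace E μ w S T N v fe) {f : V × V} (hf : f ∈ T) :
    trRank N v f.1 < trRank N v f.2 := by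
  obtain ⟨i, hi, rfl, h1, h2, _⟩ := tr_edge_rank tr hf
  omega

theorem tr_indeg (tr : PTrace E μ w S T N v fe) {f g : V × V}
    (hf : f ∈ T) (hg : g ∈ T) (hfg : f.2 = g.2) : f = g := by
  obtain ⟨i, hi, rfl, h1, _, _⟩ := tr_edge_rank tr hf
  obtain ⟨j, hj, rfl, h2, _, _⟩ := tr_edge_rank tr hg
  rw [hfg] at h1
  have : i = j := by omega
  rw [this]

theorem tr_noin_w (tr : PTrace E μ w S T N v fe) {f : V × V} (hf : f ∈ T) :
    f.2 ≠ w := by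
  obtain ⟨i, hi, rfl, _, _, _⟩ := tr_edge_rank tr hf
  rw [tr.head i hi, ← tr.v0]
  intro hcon
  have := tr.inj (i+1) (by omega) 0 (by omega) hcon
  omega

theorem tr_inedge (tr : PTrace E μ w S T N v fe) (huniv : ∀ x, x ∈ S)
    {x : V} (hx : x ≠ w) :
    ∃ f ∈ T, f.2 = x ∧ trRank N v f.1 < trRank N v x ∧
      f = fe (trRank N v x - 1) := by
  obtain ⟨hle, hvx⟩ := trRank_le tr huniv x
  set i := trRank N v x with hidef
  have hipos : 0 < i := by
    rcases Nat.eq_zero_or_pos i with h0 | h; swap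
    · exact h
    · rw [h0] at hvx; rw [← hvx] at hx; exact absurd tr.v0 hx
  refine ⟨fe (i-1), ?_, ?_, ?_, rfl⟩
  · rw [tr.hT]
    exact Finset.mem_image_of_mem _ (Finset.mem_range.2 (by omega))
  · rw [tr.head (i-1) (by omega)]
    have : i - 1 + 1 = i := by omega
    rw [this, hvx]
  · obtain ⟨j, hj, hje⟩ := tr.tail (i-1) (by omega)
    rw [hje, trRank_spec tr (by omega)]
    omega

/-- the margin of the entering edge of `x` -/
theorem tr_hmax_at (tr : PTrace E μ w S T N v fe) {i : ℕ} (hi : i < N)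
    {g : V × V} (hg : g ∈ E) (h1 : trRank N v g.1 ≤ i) (hv1 : v (trRank N v g.1) = g.1)
    (h2 : i + 1 ≤ trRank N v g.2) (hv2 : v (trRank N v g.2) = g.2)
    (h2N : trRank N v g.2 ≤ N) :
    μ g ≤ μ (fe i) := by
  apply tr.hmax i hi g hg
  · exact ⟨trRank N v g.1, h1, hv1.symm⟩
  · intro j hj hcon
    have := tr.inj j (by omega) (trRank N v g.2) h2N (by rw [hv2, hcon])
    omega

end PrimTrace

section MainLemmas

variable {V : Type*} [Fintype V] {μ : V × V → ℤ} {ME : Finset (V × V)}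

theorem reach_closed {E' : Finset (V × V)} {S : Finset V}
    (hcl : ∀ f ∈ E', f.1 ∈ S → f.2 ∈ S) {a b : V} (h : Reach E' a b)
    (ha : a ∈ S) : b ∈ S := by
  rw [RiverAux.reach_iff_rtg] at h
  induction h with
  | refl => exact ha
  | @tail c d hac hcd ih => exact hcl (c, d) hcd ih

theorem pathFrom_mem_reach {E : Finset (V × V)} {l : List V} {x y : V}
    (h : IsPathFrom E l x y) {z : V} (hz : z ∈ l) : Reach E z y := by
  induction l generalizing x with
  | nil => simp at hz
  | cons a r ih =>
    obtain ⟨_, hnd, hhd, hlast, hch⟩ := h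
    rcases List.mem_cons.1 hz with hza | hz'
    · subst hza
      exact ⟨z :: r, by simp, hnd, by simp, hlast, hch⟩
    · have hrne : r ≠ [] := by rintro rfl; simp at hz'
      apply ih (x := r.head hrne) _ hz'
      refine ⟨hrne, hnd.of_cons, ?_, ?_, hch.tail⟩
      · rw [List.head?_eq_head hrne]
      · rw [List.getLast?_eq_getLast (by simp [hrne] : a :: r ≠ [])] at hlast
        rw [List.getLast?_eq_getLast hrne]
        rwa [List.getLast_cons hrne] at hlast

/-- every River diagram is contained in the semi-River diagram -/
theorem semi_contains_river {o o' : List (V × V)} (ho : GoodOrd μ ME o)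
    (ho' : GoodOrd μ ME o') :
    riverFold o' ⊆ semiRiverFold μ o := by
  set G := semiRiverFold μ o with hGdef
  set R := riverFold o' with hRdef
  have key : ∀ n : ℕ, ∀ f ∈ R, (ME.filter fun g => μ f < μ g).card = n → f ∈ G := by
    intro n
    induction n using Nat.strong_induction_on with
    | _ n IH =>
      intro f hfR hcard
      have hfME : f ∈ ME := river_mem_ME ho' hfR
      have IH' : ∀ f' ∈ R, μ f < μ f' → f' ∈ G := by
        intro f' hf' hμ
        have hf'ME : f' ∈ ME := river_mem_ME ho' hf'
        refine IH _ ?_ f' hf' rfl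
        rw [← hcard]
        apply Finset.card_lt_card
        constructor
        · intro g hg; rw [Finset.mem_filter] at hg ⊢; exact ⟨hg.1, by omega⟩
        · intro hsub
          have := hsub (Finset.mem_filter.2 ⟨hf'ME, hμ⟩)
          rw [Finset.mem_filter] at this; omega
      rw [semi_char ho hfME]
      rintro (⟨h, hh, h2, h3⟩ | ⟨hanc, hacyc2, hsrc⟩)
      · -- SR1 case is impossible
        rw [SgtF, Finset.mem_filter] at hh
        obtain ⟨hhG, hμh⟩ := hh
        have hhME : h ∈ ME := semi_mem_ME ho hhG
        have hhR : h ∉ R := by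
          intro hhR
          have := river_indeg o' h hhR f hfR h2
          rw [this] at hμh; omega
        rcases river_reject ho' hhME hhR with ⟨g, hgR, hg2, hgμ⟩ | hr
        · have := river_indeg o' g hgR f hfR (by rw [hg2, h2])
          rw [this] at hgμ; omega
        · apply h3
          rw [h2] at hr
          refine RiverAux.reach_mono ?_ hr
          intro x hx
          rw [Finset.mem_filter] at hx ⊢
          exact ⟨IH' x hx.1 (by omega), hx.2⟩
      · -- SR2 case is impossible
        have noin : ∀ x ∈ R, μ f < μ x → x.2 ≠ f.2 := by
          intro x hx hμx hcon
          have := river_indeg o' x hx f hfR hcon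
          rw [this] at hμx; omega
        have climb : ∀ n' : ℕ, ∀ u : V, rMeas R u = n' → AncP μ G f u →
            Reach (R.filter fun g => μ f < μ g) u f.1 → False := by
          intro n'
          induction n' using Nat.strong_induction_on with
          | _ n' IHc =>
            intro u hmeas hu hru
            by_cases huf : u = f.2
            · subst huf
              exact river_accept ho' hfR hru
            · by_cases hcase : ∃ x ∈ R, x.2 = u ∧ μ f < μ x
              · obtain ⟨x, hxR, hx2, hxμ⟩ := hcase
                have hxG : x ∈ G := IH' x hxR hxμ
                have hedge : (x.1, u) ∈ R.filter fun g => μ f < μ g := by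
                  rw [Finset.mem_filter, ← hx2, Prod.mk.eta]
                  exact ⟨hxR, hxμ⟩
                have hedge' : (x.1, u) ∈ (SgtF μ G f).filter fun g => g.2 ≠ f.2 := by
                  rw [Finset.mem_filter, SgtF, Finset.mem_filter, ← hx2, Prod.mk.eta]
                  exact ⟨⟨hxG, hxμ⟩, hx2 ▸ huf⟩
                refine IHc (rMeas R x.1) ?_ x.1 rfl ?_ ?_
                · rw [← hmeas, ← hx2]; exact rMeas_lt (river_acyclic o') hxR
                · exact RiverAux.reach_trans (RiverAux.reach_head hedge') hu
                · exact RiverAux.reach_trans (RiverAux.reach_head hedge) hru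
              · have hex : ∃ g' ∈ IndF μ G f, g'.2 = u := by
                  by_contra hno
                  push_neg at hno
                  exact huf ((hsrc u hu).1 (fun g hg => hno g hg))
                obtain ⟨g', hg'Ind, hg'2⟩ := hex
                have hg'Ind' := hg'Ind
                rw [IndF, Finset.mem_filter] at hg'Ind'
                obtain ⟨hg'Sgt, hg'a1, hg'a2⟩ := hg'Ind'
                rw [SgtF, Finset.mem_filter] at hg'Sgt
                obtain ⟨hg'G, hg'μ⟩ := hg'Sgt
                have hg'ME : g' ∈ ME := semi_mem_ME ho hg'G
                have hg'R : g' ∉ R := fun hcon =>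
                  hcase ⟨g', hcon, hg'2, hg'μ⟩
                rcases river_reject ho' hg'ME hg'R with ⟨x, hxR, hx2, hxμ⟩ | hr
                · exact hcase ⟨x, hxR, by rw [hx2, hg'2], by omega⟩
                · rw [hg'2] at hr
                  have hsubAll : (R.filter fun g => μ g' ≤ μ g) ⊆
                      (SgtF μ G f).filter fun g => g.2 ≠ f.2 := by
                    intro x hx
                    rw [Finset.mem_filter] at hx
                    rw [Finset.mem_filter, SgtF, Finset.mem_filter]
                    refine ⟨⟨IH' x hx.1 (by omega), by omega⟩, noin x hx.1 (by omega)⟩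
                  have hreachInd : Reach (IndF μ G f) u g'.1 := by
                    refine RiverAux.reach_induced hr ?_
                    intro a b hab hbr
                    rw [Finset.mem_filter] at hab
                    have hancb : AncP μ G f b := by
                      refine RiverAux.reach_trans ?_ hg'a1
                      exact RiverAux.reach_mono hsubAll hbr
                    have hanca : AncP μ G f a := by
                      refine RiverAux.reach_trans ?_ hancb
                      exact RiverAux.reach_head (hsubAll (Finset.mem_filter.2 hab))
                    rw [IndF, Finset.mem_filter, SgtF, Finset.mem_filter]
                    exact ⟨⟨IH' _ hab.1 (by omega), by omega⟩, hanca, hancb⟩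
                  exact hacyc2 ⟨g', hg'Ind, hg'2 ▸ hreachInd⟩
        exact climb _ f.1 rfl (RiverAux.reach_refl _ _) (RiverAux.reach_refl _ _)
  intro f hf
  exact key _ f hf rfl

end MainLemmas

section Rejection

variable {V : Type*} [Fintype V] {μ : V × V → ℤ} {ME : Finset (V × V)}
variable {o o' : List (V × V)} {w : V} {S : Finset V} {T : Finset (V × V)}
variable {N : ℕ} {v : ℕ → V} {fe : ℕ → V × V}

/-- Key Prim lemma: a semi-River edge whose head has no tree in-edge of at least
its margin admits a strong tree path from its head back to its tail. -/
theorem rejG (ho : GoodOrd μ ME o) (ho' : GoodOrd μ ME o')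
    (hw : noIncoming (riverFold o') w)
    (hdist : ∀ e ∈ ME, e.1 ≠ e.2)
    (tr : PTrace (semiRiverFold μ o) μ w S T N v fe)
    (huniv : ∀ x, x ∈ S)
    {g : V × V} (hgG : g ∈ semiRiverFold μ o) (hgT : g ∉ T)
    (hnostrong : ∀ f ∈ T, f.2 = g.2 → μ f < μ g) :
    Reach (T.filter fun f => μ g ≤ μ f) g.2 g.1 := by
  set G := semiRiverFold μ o with hGdef
  have hTsub : ∀ f ∈ T, f ∈ G := by
    intro f hf
    obtain ⟨i, hi, rfl, _, _, _⟩ := tr_edge_rank tr hf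
    exact tr.memE i hi
  have hrspec : ∀ x, trRank N v x ≤ N ∧ v (trRank N v x) = x := trRank_le tr huniv
  have hrinj : ∀ x y, trRank N v x = trRank N v y → x = y := by
    intro x y hxy
    have hx := (hrspec x).2
    have hy := (hrspec y).2
    rw [← hx, ← hy, hxy]
  have hrw : trRank N v w = 0 := by
    rw [← tr.v0, trRank_spec tr (by omega)]
  have hwzero : ∀ x, trRank N v x = 0 → x = w := fun x h => hrinj x w (by rw [h, hrw])
  -- (★): a strong semi-River path from g.2 to g.1
  have hstar : Reach (G.filter fun x => μ g ≤ μ x) g.2 g.1 := by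
    by_cases hg2w : g.2 = w
    · have hgME : g ∈ ME := semi_mem_ME ho hgG
      have hgR : g ∉ riverFold o' := fun hmem => hw g hmem hg2w
      rcases river_reject ho' hgME hgR with ⟨f, hfR, hf2, _⟩ | hr
      · exact absurd (show f.2 = w by rw [hf2]; exact hg2w) (hw f hfR)
      · refine RiverAux.reach_mono ?_ hr
        intro x hx
        rw [Finset.mem_filter] at hx ⊢
        exact ⟨semi_contains_river ho ho' hx.1, hx.2⟩
    · obtain ⟨f₂, hf₂T, hf₂2, hf₂rk, hf₂eq⟩ := tr_inedge tr huniv hg2w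
      have hf₂G : f₂ ∈ G := hTsub _ hf₂T
      have hf₂ME : f₂ ∈ ME := semi_mem_ME ho hf₂G
      have hμf₂ : μ f₂ < μ g := hnostrong f₂ hf₂T hf₂2
      have hchar := (semi_char ho hf₂ME).1 hf₂G
      rw [not_or] at hchar
      have hnot1 := hchar.1
      rw [SR1] at hnot1
      push_neg at hnot1
      have hres := hnot1 g (by rw [SgtF, Finset.mem_filter]; exact ⟨hgG, hμf₂⟩)
        (by rw [hf₂2])
      rwa [hf₂2] at hres
  -- rank comparison: g.2 entered strictly before g.1
  have hr21 : trRank N v g.2 < trRank N v g.1 := by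
    have hne : g.1 ≠ g.2 := hdist g (semi_mem_ME ho hgG)
    have hneq : trRank N v g.1 ≠ trRank N v g.2 := fun h => hne (hrinj _ _ h)
    rcases lt_or_gt_of_ne hneq with hlt | hgt
    · exfalso
      have hg2w : g.2 ≠ w := by
        intro h; rw [h, hrw] at hlt; omega
      obtain ⟨f₂, hf₂T, hf₂2, hf₂rk, hf₂eq⟩ := tr_inedge tr huniv hg2w
      have hg2pos : 0 < trRank N v g.2 := Nat.pos_of_ne_zero (fun h0 => hg2w (hwzero _ h0))
      have hiN : trRank N v g.2 - 1 < N := by have := (hrspec g.2).1; omega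
      have hmaxi := tr_hmax_at tr hiN hgG (show trRank N v g.1 ≤ trRank N v g.2 - 1 by omega)
        (hrspec g.1).2 (by omega) (hrspec g.2).2 (hrspec g.2).1
      rw [← hf₂eq] at hmaxi
      have := hnostrong f₂ hf₂T hf₂2
      omega
    · exact hgt
  -- step claim: every entering edge between the entry of g.2 and of g.1 is strong
  have hstep : ∀ j, trRank N v g.2 < j → j ≤ trRank N v g.1 → μ g ≤ μ (fe (j-1)) := by
    intro j hj1 hj2
    obtain ⟨c, hc, hc1, hc2⟩ := RiverAux.reach_crossing (fun x => trRank N v x ≤ j - 1)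
      hstar (by omega) (by omega)
    rw [Finset.mem_filter] at hc
    push_neg at hc2
    have hcN := (hrspec c.2).1
    have hiN : j - 1 < N := by have := (hrspec g.1).1; omega
    have := tr_hmax_at tr hiN hc.1 hc1 (hrspec c.1).2 (by omega) (hrspec c.2).2 hcN
    omega
  -- the climb from g.1 back to g.2
  have hclimb : ∀ n : ℕ, ∀ u, trRank N v u = n → trRank N v g.2 ≤ trRank N v u → trRank N v u ≤ trRank N v g.1 →
      Reach (T.filter fun f => μ g ≤ μ f) u g.1 →
      Reach (T.filter fun f => μ g ≤ μ f) g.2 g.1 := by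
    intro n
    induction n using Nat.strong_induction_on with
    | _ n IHc =>
      intro u hun hlb hub hreach
      by_cases hug : u = g.2
      · rwa [hug] at hreach
      · have hlb' : trRank N v g.2 < trRank N v u :=
          lt_of_le_of_ne hlb (fun h => hug (hrinj _ _ h.symm))
        have huw : u ≠ w := by
          intro h; rw [h, hrw] at hlb'; omega
        obtain ⟨fu, hfuT, hfu2, hfurk, hfueq⟩ := tr_inedge tr huniv huw
        have hμfu : μ g ≤ μ fu := by
          have := hstep (trRank N v u) hlb' hub
          rwa [← hfueq] at this
        have hpair : (fu.1, u) = fu := by rw [← hfu2]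
        have hnewreach : Reach (T.filter fun f => μ g ≤ μ f) fu.1 g.1 := by
          refine RiverAux.reach_trans (RiverAux.reach_head ?_) hreach
          rw [hpair, Finset.mem_filter]
          exact ⟨hfuT, hμfu⟩
        have hrfu : trRank N v fu.1 < trRank N v u := hfurk
        by_cases hcase : trRank N v g.2 ≤ trRank N v fu.1
        · exact IHc (trRank N v fu.1) (by omega) fu.1 rfl hcase (by omega) hnewreach
        · exfalso
          push_neg at hcase
          have hg2w : g.2 ≠ w := by
            intro h; rw [h, hrw] at hcase; omega
          obtain ⟨f₂, hf₂T, hf₂2, hf₂rk, hf₂eq⟩ := tr_inedge tr huniv hg2w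
          have hg2pos : 0 < trRank N v g.2 := Nat.pos_of_ne_zero (fun h0 => hg2w (hwzero _ h0))
          have hiN : trRank N v g.2 - 1 < N := by have := (hrspec g.2).1; omega
          have hfuG : fu ∈ G := hTsub _ hfuT
          have hru2 : trRank N v fu.2 = trRank N v u := by rw [hfu2]
          have hmaxi := tr_hmax_at tr hiN hfuG (show trRank N v fu.1 ≤ trRank N v g.2 - 1 by omega)
            (hrspec fu.1).2 (by omega) (hrspec fu.2).2 (hrspec fu.2).1
          rw [← hf₂eq] at hmaxi
          have := hnostrong f₂ hf₂T hf₂2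
          omega
  exact hclimb (trRank N v g.1) g.1 rfl (by omega) (le_refl _) (RiverAux.reach_refl _ _)

/-- rejection lemma for margin edges outside the semi-River diagram -/
theorem rej_nonG (ho : GoodOrd μ ME o) (ho' : GoodOrd μ ME o')
    (hw : noIncoming (riverFold o') w)
    (hdist : ∀ e ∈ ME, e.1 ≠ e.2)
    (tr : PTrace (semiRiverFold μ o) μ w S T N v fe)
    (huniv : ∀ x, x ∈ S)
    {e : V × V} (heME : e ∈ ME) (heG : e ∉ semiRiverFold μ o)
    (hnostrong : ∀ f ∈ T, f.2 = e.2 → μ f < μ e) :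
    Reach (T.filter fun f => μ e ≤ μ f) e.2 e.1 := by
  set G := semiRiverFold μ o with hGdef
  have hTsub : ∀ f ∈ T, f ∈ G := by
    intro f hf
    obtain ⟨i, hi, rfl, _, _, _⟩ := tr_edge_rank tr hf
    exact tr.memE i hi
  have hcond : SR1 μ G e ∨ SR2 μ G e := by
    by_contra hc
    exact heG ((semi_char ho heME).2 hc)
  rcases hcond with ⟨h, hhSgt, h2, h3⟩ | ⟨hanc, hacyc2, hsrc⟩
  · -- SR1 is impossible
    exfalso
    rw [SgtF, Finset.mem_filter] at hhSgt
    obtain ⟨hhG, hμh⟩ := hhSgt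
    have hhT : h ∉ T := fun hcon => by
      have := hnostrong h hcon h2; omega
    have hno' : ∀ f ∈ T, f.2 = h.2 → μ f < μ h := by
      intro f hf hf2
      have := hnostrong f hf (by rw [hf2, h2]); omega
    have hrg := rejG ho ho' hw hdist tr huniv hhG hhT hno'
    apply h3
    rw [← h2]
    refine RiverAux.reach_mono ?_ hrg
    intro x hx
    rw [Finset.mem_filter] at hx ⊢
    exact ⟨hTsub _ hx.1, hx.2⟩
  · -- SR2 holds: climb within the ancestor set
    suffices hsuff : Reach (T.filter fun f => μ e < μ f) e.2 e.1 by
      refine RiverAux.reach_mono ?_ hsuff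
      intro x hx
      rw [Finset.mem_filter] at hx ⊢
      exact ⟨hx.1, by omega⟩
    have climb2 : ∀ n : ℕ, ∀ u, trRank N v u = n → AncP μ G e u →
        Reach (T.filter fun f => μ e < μ f) u e.1 →
        Reach (T.filter fun f => μ e < μ f) e.2 e.1 := by
      intro n
      induction n using Nat.strong_induction_on with
      | _ n IHc =>
        intro u hun hu hreach
        by_cases hue : u = e.2
        · rwa [hue] at hreach
        · by_cases hcase : ∃ x ∈ T, x.2 = u ∧ μ e < μ x
          · obtain ⟨x, hxT, hx2, hxμ⟩ := hcase
            have hxG : x ∈ G := hTsub _ hxT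
            have hpair : (x.1, u) = x := by rw [← hx2]
            have hedge' : (x.1, u) ∈ (SgtF μ G e).filter fun g => g.2 ≠ e.2 := by
              rw [hpair, Finset.mem_filter, SgtF, Finset.mem_filter]
              exact ⟨⟨hxG, hxμ⟩, by rw [hx2]; exact hue⟩
            have hedgeT : (x.1, u) ∈ T.filter fun f => μ e < μ f := by
              rw [hpair, Finset.mem_filter]
              exact ⟨hxT, hxμ⟩
            have hrk : trRank N v x.1 < n := by
              rw [← hun, ← hx2]
              exact tr_rank_lt tr hxT
            refine IHc (trRank N v x.1) hrk x.1 rfl ?_ ?_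
            · exact RiverAux.reach_trans (RiverAux.reach_head hedge') hu
            · exact RiverAux.reach_trans (RiverAux.reach_head hedgeT) hreach
          · have hex : ∃ g' ∈ IndF μ G e, g'.2 = u := by
              by_contra hno
              push_neg at hno
              exact hue ((hsrc u hu).1 (fun g hg => hno g hg))
            obtain ⟨g', hg'Ind, hg'2⟩ := hex
            have hg'Ind' := hg'Ind
            rw [IndF, Finset.mem_filter] at hg'Ind'
            obtain ⟨hg'Sgt, hg'a1, hg'a2⟩ := hg'Ind'
            rw [SgtF, Finset.mem_filter] at hg'Sgt
            obtain ⟨hg'G, hg'μ⟩ := hg'Sgt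
            have hg'T : g' ∉ T := fun hcon => hcase ⟨g', hcon, hg'2, by omega⟩
            have hno' : ∀ f ∈ T, f.2 = g'.2 → μ f < μ g' := by
              intro f hf hf2
              by_contra hge
              push_neg at hge
              exact hcase ⟨f, hf, by rw [← hg'2]; exact hf2, by omega⟩
            have hrej := rejG ho ho' hw hdist tr huniv hg'G hg'T hno'
            rw [hg'2] at hrej
            have hsubAll : (T.filter fun f => μ g' ≤ μ f) ⊆
                (SgtF μ G e).filter fun g => g.2 ≠ e.2 := by
              intro x hx
              rw [Finset.mem_filter] at hx
              rw [Finset.mem_filter, SgtF, Finset.mem_filter]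
              refine ⟨⟨hTsub _ hx.1, by omega⟩, ?_⟩
              intro hcon
              have := hnostrong x hx.1 hcon
              omega
            have hreachInd : Reach (IndF μ G e) u g'.1 := by
              refine RiverAux.reach_induced hrej ?_
              intro a b hab hbr
              rw [Finset.mem_filter] at hab
              have hancb : AncP μ G e b :=
                RiverAux.reach_trans (RiverAux.reach_mono hsubAll hbr) hg'a1
              have hanca : AncP μ G e a :=
                RiverAux.reach_trans
                  (RiverAux.reach_head (hsubAll (Finset.mem_filter.2 hab))) hancb
              rw [IndF, Finset.mem_filter, SgtF, Finset.mem_filter]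
              exact ⟨⟨hTsub _ hab.1, by omega⟩, hanca, hancb⟩
            exact absurd ⟨g', hg'Ind, hg'2 ▸ hreachInd⟩ hacyc2
    exact climb2 (trRank N v e.1) e.1 rfl (RiverAux.reach_refl _ _) (RiverAux.reach_refl _ _)

end Rejection

section FoldAssembly

variable {V : Type*} [Fintype V] {μ : V × V → ℤ} {ME : Finset (V × V)}
variable {o o' : List (V × V)} {w : V} {S : Finset V} {T : Finset (V × V)}
variable {N : ℕ} {v : ℕ → V} {fe : ℕ → V × V}

theorem fold_eq_T (ho : GoodOrd μ ME o) (ho' : GoodOrd μ ME o')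
    (hw : noIncoming (riverFold o') w)
    (hdist : ∀ e ∈ ME, e.1 ≠ e.2)
    (tr : PTrace (semiRiverFold μ o) μ w S T N v fe) (huniv : ∀ x, x ∈ S)
    {orsp : List (V × V)} (hnd : orsp.Nodup) (hmem : ∀ e, e ∈ orsp ↔ e ∈ ME)
    (hpw : orsp.Pairwise fun e f => μ f ≤ μ e ∧ (μ e = μ f → f ∈ T → e ∈ T)) :
    riverFold orsp = T := by
  have hTsub : ∀ f ∈ T, f ∈ semiRiverFold μ o := by
    intro f hf
    obtain ⟨i, hi, rfl, _, _, _⟩ := tr_edge_rank tr hf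
    exact tr.memE i hi
  have hTME : ∀ f ∈ T, f ∈ ME := fun f hf => semi_mem_ME ho (hTsub f hf)
  have hrlt : ∀ f ∈ T, trRank N v f.1 < trRank N v f.2 := fun f hf => tr_rank_lt tr hf
  have key : ∀ s p, orsp = p ++ s → p.foldl riverStep ∅ = T ∩ p.toFinset →
      riverFold orsp = T := by
    intro s
    induction s with
    | nil =>
      intro p hps hfold
      rw [hps] at hmem ⊢
      rw [List.append_nil] at hmem ⊢
      unfold riverFold
      rw [hfold]
      apply Finset.inter_eq_left.2
      intro f hf
      exact List.mem_toFinset.2 ((hmem f).2 (hTME f hf))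
    | cons e s' ih =>
      intro p hps hfold
      have hep : e ∉ p := by
        rw [hps] at hnd
        exact fun hp => (List.disjoint_of_nodup_append hnd) hp (by simp)
      have heME : e ∈ ME := (hmem e).1 (by rw [hps]; simp)
      have hstep : p.foldl riverStep ∅ = T ∩ p.toFinset →
          riverStep (T ∩ p.toFinset) e = T ∩ (p ++ [e]).toFinset := by
        intro _
        by_cases heT : e ∈ T
        · -- e is accepted
          have hnoR1 : ¬ ∃ f ∈ T ∩ p.toFinset, f.2 = e.2 := by
            rintro ⟨f, hfD, hf2⟩
            rw [Finset.mem_inter] at hfD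
            have hfe : f = e := tr_indeg tr hfD.1 heT hf2
            rw [hfe] at hfD
            exact hep (List.mem_toFinset.1 hfD.2)
          have hnoR2 : ¬ Reach (T ∩ p.toFinset) e.2 e.1 := by
            intro hre
            have hsubT : (T ∩ p.toFinset) ⊆ T := Finset.inter_subset_left
            have hrr := RiverAux.reach_rank
              (fun f hf => hrlt f (hsubT hf)) hre
            rcases hrr with heq | hlt
            · exact hdist e heME heq.symm
            · have := hrlt e heT; omega
          rw [riverStep_eq_insert (by push_neg; exact ⟨fun f hf => by
              intro hcon; exact hnoR1 ⟨f, hf, hcon⟩, hnoR2⟩)]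
          ext x
          simp only [Finset.mem_insert, Finset.mem_inter, List.mem_toFinset,
            List.mem_append, List.mem_singleton]
          constructor
          · rintro (rfl | ⟨h1, h2⟩)
            · exact ⟨heT, Or.inr rfl⟩
            · exact ⟨h1, Or.inl h2⟩
          · rintro ⟨h1, h2 | h2⟩
            · exact Or.inr ⟨h1, h2⟩
            · exact Or.inl h2
        · -- e is rejected
          have hDT : (T.filter fun f => μ e ≤ μ f) ⊆ T ∩ p.toFinset := by
            intro f hf
            rw [Finset.mem_filter] at hf
            obtain ⟨hfT, hfμ⟩ := hf
            have hforsp : f ∈ orsp := (hmem f).2 (hTME f hfT)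
            have hfne : f ≠ e := fun h => heT (h ▸ hfT)
            rw [hps] at hforsp
            rcases List.mem_append.1 hforsp with hfp | hfes
            · exact Finset.mem_inter.2 ⟨hfT, List.mem_toFinset.2 hfp⟩
            · exfalso
              rcases List.mem_cons.1 hfes with h | hfs'
              · exact hfne h
              · have hpair := hpw
                rw [hps] at hpair
                have hp2 := (List.pairwise_append.1 hpair).2.1
                have hrel := List.rel_of_pairwise_cons hp2 hfs'
                exact heT (hrel.2 (by omega) hfT)
          have hcond : (∃ f ∈ T ∩ p.toFinset, f.2 = e.2) ∨
              Reach (T ∩ p.toFinset) e.2 e.1 := by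
            by_cases hstrong : ∃ f ∈ T, f.2 = e.2 ∧ μ e ≤ μ f
            · obtain ⟨f, hfT, hf2, hfμ⟩ := hstrong
              exact Or.inl ⟨f, hDT (Finset.mem_filter.2 ⟨hfT, hfμ⟩), hf2⟩
            · push_neg at hstrong
              have hnostrong : ∀ f ∈ T, f.2 = e.2 → μ f < μ e := hstrong
              refine Or.inr (RiverAux.reach_mono hDT ?_)
              by_cases heG : e ∈ semiRiverFold μ o
              · exact rejG ho ho' hw hdist tr huniv heG heT hnostrong
              · exact rej_nonG ho ho' hw hdist tr huniv heME heG hnostrong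
          rw [riverStep_eq_self hcond]
          ext x
          simp only [Finset.mem_inter, List.mem_toFinset, List.mem_append,
            List.mem_singleton]
          constructor
          · rintro ⟨h1, h2⟩; exact ⟨h1, Or.inl h2⟩
          · rintro ⟨h1, h2 | h2⟩
            · exact ⟨h1, h2⟩
            · exfalso; rw [h2] at h1; exact heT h1
      apply ih (p ++ [e])
      · rw [hps, List.append_assoc]; rfl
      · rw [List.foldl_append, hfold]
        simp only [List.foldl_cons, List.foldl_nil]
        exact hstep hfold
  apply key orsp [] rfl
  simp

theorem rooted_tree_of_trace {E : Finset (V × V)}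
    (tr : PTrace E μ w S T N v fe) (huniv : ∀ x, x ∈ S) :
    IsRootedTree T w := by
  refine ⟨?_, fun e he => tr_noin_w tr he, fun e f he hf h2 => tr_indeg tr he hf h2⟩
  have key : ∀ n x, trRank N v x = n → ∃! l, IsPathFrom T l w x := by
    intro n
    induction n using Nat.strong_induction_on with
    | _ n IH =>
      intro x hx
      by_cases hxw : x = w
      · subst hxw
        refine ⟨[x], ?_, fun l hl => RiverAux.pathFrom_eq_singleton hl⟩
        exact ⟨by simp, by simp, by simp, by simp, by simp [List.Chain']⟩
      · obtain ⟨fx, hfxT, hfx2, hfxrk, hfxeq⟩ := tr_inedge tr huniv hxw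
        obtain ⟨pu, hpu, hpuniq⟩ := IH (trRank N v fx.1) (by omega) fx.1 rfl
        have hpair : (fx.1, x) = fx := by rw [← hfx2]
        have hxnot : x ∉ pu := by
          intro hmem
          have hr := pathFrom_mem_reach hpu hmem
          have hrr := RiverAux.reach_rank (fun f hf => tr_rank_lt tr hf) hr
          rcases hrr with heq | hlt
          · rw [heq] at hfxrk; omega
          · omega
        have hex : IsPathFrom T (pu ++ [x]) w x := by
          obtain ⟨hne, hnd2, hhd, hlast, hch⟩ := hpu
          refine ⟨by simp, ?_, ?_, by simp, ?_⟩
          · simp [List.nodup_append, hnd2, hxnot]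
            intro a ha h; exact hxnot (h ▸ ha)
          · rw [List.head?_append_of_ne_nil pu hne]; exact hhd
          · unfold List.Chain'; rw [List.isChain_append]
            refine ⟨hch, by simp, ?_⟩
            intro a ha b hb
            simp only [List.head?_cons, Option.mem_def, Option.some.injEq] at hb
            subst hb
            rw [hlast] at ha
            simp only [Option.mem_def, Option.some.injEq] at ha
            subst ha
            rw [hpair]; exact hfxT
        refine ⟨pu ++ [x], hex, ?_⟩
        intro l hl
        obtain ⟨hne, hnd2, hhd, hlast, hch⟩ := hl
        have hgl : l.getLast hne = x := by
          rw [List.getLast?_eq_getLast hne] at hlast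
          simpa using hlast
        have hl2 : l.dropLast ++ [x] = l := by
          rw [← hgl]
          exact List.dropLast_append_getLast hne
        have hdne : l.dropLast ≠ [] := by
          intro h0
          rw [h0] at hl2
          simp at hl2
          rw [← hl2] at hhd
          simp at hhd
          exact hxw hhd.symm.symm
        rw [← hl2] at hch hnd2 hhd
        unfold List.Chain' at hch; rw [List.isChain_append] at hch
        obtain ⟨hch1, -, hcross⟩ := hch
        have hlastd := List.getLast?_eq_getLast hdne
        have hedge : (l.dropLast.getLast hdne, x) ∈ T := by
          apply hcross _ _ x (by simp)
          rw [hlastd]; simp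
        have hfeq : (l.dropLast.getLast hdne, x) = fx :=
          tr_indeg tr hedge hfxT (by rw [hfx2])
        have hlastu : l.dropLast.getLast hdne = fx.1 := by
          have := congrArg Prod.fst hfeq; simpa using this
        have hdpath : IsPathFrom T l.dropLast w fx.1 := by
          refine ⟨hdne, hnd2.of_append_left, ?_, ?_, hch1⟩
          · rw [List.head?_append_of_ne_nil _ hdne] at hhd; exact hhd
          · rw [hlastd, hlastu]
        have hdu := hpuniq _ hdpath
        rw [← hl2, hdu]
  exact fun x => key _ x rfl

end FoldAssembly

section ProfileFacts

variable {A : Type*} [Fintype A] {m : ℕ}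

theorem margin_antisymm (P : Profile A m) (x y : A) :
    margin P x y = - margin P y x := by
  unfold margin; ring

theorem marginEdges_dist (P : Profile A m) : ∀ e ∈ marginEdges P, e.1 ≠ e.2 := by
  intro e he
  simp only [marginEdges, Finset.mem_filter] at he
  exact he.2.1

theorem marginEdges_comp (P : Profile A m) : ∀ x y : A, x ≠ y →
    (x, y) ∈ marginEdges P ∨ (y, x) ∈ marginEdges P := by
  intro x y hxy
  simp only [marginEdges, Finset.mem_filter, Finset.mem_univ, true_and]
  have hsym := margin_antisymm P x y
  by_cases h : 0 ≤ margin P x y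
  · exact Or.inl ⟨hxy, h⟩
  · exact Or.inr ⟨hxy.symm, by omega⟩

end ProfileFacts

/-- Let `w` be a River PUT winner of `P`. Let `T` be an output of the
directed Prim algorithm started at `w` on the semi-River diagram `sRV(P)` (weighted by
the margins, and computed with any descending linear ordering `o`), and let `orsp` be
any descending linear ordering of the margin-graph edges in which, among edges of equal
margin, edges of `T` come first. Then `T = M^RV(orsp, P)`; in particular `w` is the root
of `M^RV(orsp, P)` and hence `w ∈ RV(orsp, P)`. -/
theorem put_winner_rspt_equals_river_diagram
    {A : Type*} [Fintype A] {m : ℕ} (hm : 1 ≤ m) (hA : 2 ≤ Fintype.card A)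
    (P : Profile A m) (w : A)
    (hput : ∃ o : List (A × A), IsDescOrdering (marginE P) (marginEdges P) o ∧
      noIncoming (riverFold o) w)
    (o : List (A × A)) (ho : IsDescOrdering (marginE P) (marginEdges P) o)
    (T : Finset (A × A))
    (hT : IsPrimOutput (semiRiverFold (marginE P) o) (marginE P) w T)
    (orsp : List (A × A))
    (horsp : IsSetOrdering (marginE P) (marginEdges P) T orsp) :
    T = riverFold orsp ∧ IsRootedTree (riverFold orsp) w ∧
      noIncoming (riverFold orsp) w := by
  classical
  obtain ⟨o', ho'0, hw⟩ := hput
  have ho'g : GoodOrd (marginE P) (marginEdges P) o' := ⟨ho'0.1, ho'0.2.1, ho'0.2.2⟩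
  have hog : GoodOrd (marginE P) (marginEdges P) o := ⟨ho.1, ho.2.1, ho.2.2⟩
  obtain ⟨S, hrun, hclose⟩ := hT
  obtain ⟨N, v, fe, tr⟩ := prim_trace hrun
  have hdist := marginEdges_dist P
  have hcomp := marginEdges_comp P
  have hwS : w ∈ S := by
    rw [tr.hS]
    exact Finset.mem_image.2 ⟨0, Finset.mem_range.2 (by omega), tr.v0⟩
  have huniv : ∀ x, x ∈ S := by
    intro x
    have hreach : Reach (riverFold o') w x := river_spanning ho'g hcomp hw x
    have hreachG : Reach (semiRiverFold (marginE P) o) w x :=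
      RiverAux.reach_mono (semi_contains_river hog ho'g) hreach
    exact reach_closed (fun f hf => hclose f hf) hreachG hwS
  have hfold : riverFold orsp = T :=
    fold_eq_T hog ho'g hw hdist tr huniv horsp.1 horsp.2.1 horsp.2.2
  refine ⟨hfold.symm, ?_, ?_⟩
  · rw [hfold]
    exact rooted_tree_of_trace tr huniv
  · rw [hfold]
    exact fun e he => tr_noin_w tr he
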